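/- Let R be a domain with LCMs and K its field of fractions, and Ax = c a consistent nonhomogeneous system over R. Then the set I_A = { DEN(x) : x ∈ K^m, Ax = c } ∪ {0} is an ideal of R (up to associates, i.e. I_A is closed under addition and multiplication by elements of R when denominators are identified up to units). -/

import Mathlib

open Matrix

/-- over a GCD domain `R` (a domain with finite LCMs) with fraction
field `K`, for a consistent nonhomogeneous system `Ax = c`, the set of denominators
of `K`-solutions together with `0` is an ideal of `R`.  (Identifying denominators up
to associates, this set is exactly `{d : d = 0 or d is a common denominator of some
solution}`, since the multiples of `DEN(x)` are precisely the common denominators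
of `x`.) -/
theorem denominators_form_ideal {R : Type*} [CommRing R] [IsDomain R] [GCDMonoid R]
    {n m : ℕ}
    (A : Matrix (Fin n) (Fin m) R) (c : Fin n → R) (hc : c ≠ 0)
    (hcons : ∃ x : Fin m → FractionRing R,
      (A.map (algebraMap R (FractionRing R))).mulVec x
        = algebraMap R (FractionRing R) ∘ c) :
    ∃ I : Ideal R, (I : Set R) =
      {d : R | d = 0 ∨ ∃ x : Fin m → FractionRing R,
        (A.map (algebraMap R (FractionRing R))).mulVec x
            = algebraMap R (FractionRing R) ∘ c ∧
        ∀ k, ∃ y : R, algebraMap R (FractionRing R) y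
            = algebraMap R (FractionRing R) d * x k} := by
  classical
  set K := FractionRing R
  set f := algebraMap R K with hf
  have hinj : Function.Injective f := IsFractionRing.injective R K
  set S : Set R := {d : R | d = 0 ∨ ∃ x : Fin m → K,
      (A.map f).mulVec x = f ∘ c ∧
      ∀ k, ∃ y : R, f y = f d * x k} with hS
  refine ⟨⟨⟨⟨S, ?_⟩, ?_⟩, ?_⟩, rfl⟩
  · -- add_mem
    rintro a b (rfl | ⟨x, hx, hxd⟩) hb
    · simpa using hb
    rcases hb with rfl | ⟨y, hy, hyd⟩
    · exact Or.inr ⟨x, hx, by simpa using hxd⟩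
    by_cases hab : a + b = 0
    · exact Or.inl hab
    have hfab : f (a + b) ≠ 0 := fun h => hab (hinj (by simpa using h))
    refine Or.inr ⟨fun k => (f (a + b))⁻¹ * (f a * x k + f b * y k), ?_, ?_⟩
    · have : (A.map f).mulVec (fun k => (f (a + b))⁻¹ * (f a * x k + f b * y k))
          = (f (a + b))⁻¹ • (f a • (A.map f).mulVec x + f b • (A.map f).mulVec y) := by
        rw [← mulVec_smul, ← mulVec_smul, ← mulVec_add, ← mulVec_smul]
        congr 1
      have hfab' : f a + f b ≠ 0 := by rwa [← map_add]
      rw [this, hx, hy]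
      funext i
      simp only [Pi.smul_apply, Pi.add_apply, smul_eq_mul, Function.comp_apply]
      rw [map_add]
      rw [← add_mul, inv_mul_cancel_left₀ hfab']
    · intro k
      obtain ⟨z₁, hz₁⟩ := hxd k
      obtain ⟨z₂, hz₂⟩ := hyd k
      have hfab' : f a + f b ≠ 0 := by rwa [← map_add]
      refine ⟨z₁ + z₂, ?_⟩
      rw [map_add, hz₁, hz₂]
      rw [mul_inv_cancel_left₀ hfab]
  · -- zero_mem
    exact Or.inl rfl
  · -- smul_mem
    rintro r d (rfl | ⟨x, hx, hxd⟩)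
    · simp only [smul_eq_mul, mul_zero]
      exact Or.inl rfl
    refine Or.inr ⟨x, hx, fun k => ?_⟩
    obtain ⟨z, hz⟩ := hxd k
    refine ⟨r * z, ?_⟩
    simp only [smul_eq_mul]
    rw [_root_.map_mul, _root_.map_mul, hz]
    ring
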